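/- Let k be a field, C a k-coalgebra and R a k-algebra such that there is a k-linear equivalence of categories between the category Mod_R of right R-modules and the category Mod^C of right C-comodules. Then both R and C are finite dimensional over k. -/

import Mathlib

open TensorProduct CategoryTheory CategoryTheory.Limits
noncomputable section
universe u
variable (k : Type u) [Field k]
variable (C : Type u) [AddCommGroup C] [Module k C] [Coalgebra k C]

def gCounitLast (X : Type u) [AddCommGroup X] [Module k X] :
    (X ⊗[k] C) →ₗ[k] X :=
  (TensorProduct.rid k X).toLinearMap ∘ₗ LinearMap.lTensor X Coalgebra.counit

def gComulLast (X : Type u) [AddCommGroup X] [Module k X] :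
    (X ⊗[k] C) →ₗ[k] (X ⊗[k] C) ⊗[k] C :=
  (TensorProduct.assoc k X C C).symm.toLinearMap ∘ₗ LinearMap.lTensor X Coalgebra.comul

structure GComod where
  carrier : Type u
  [isAddCommGroup : AddCommGroup carrier]
  [isModule : Module k carrier]
  ρ : carrier →ₗ[k] carrier ⊗[k] C
  counit : gCounitLast k C carrier ∘ₗ ρ = LinearMap.id
  coassoc : gComulLast k C carrier ∘ₗ ρ = LinearMap.rTensor C ρ ∘ₗ ρ

attribute [instance] GComod.isAddCommGroup GComod.isModule

/-- The `k`-module of comodule morphisms, as a submodule of the space of linear maps. -/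
def gHom (A B : GComod k C) : Submodule k (A.carrier →ₗ[k] B.carrier) where
  carrier := { f | LinearMap.rTensor C f ∘ₗ A.ρ = B.ρ ∘ₗ f }
  zero_mem' := by
    simp only [Set.mem_setOf_eq, LinearMap.rTensor_zero, LinearMap.zero_comp,
      LinearMap.comp_zero]
  add_mem' := by
    intro f g hf hg
    simp only [Set.mem_setOf_eq] at hf hg ⊢
    rw [LinearMap.rTensor_add, LinearMap.add_comp, hf, hg, LinearMap.comp_add]
  smul_mem' := by
    intro c f hf
    simp only [Set.mem_setOf_eq] at hf ⊢
    rw [LinearMap.rTensor_smul, LinearMap.smul_comp, hf, LinearMap.comp_smul]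

instance : Category.{u} (GComod k C) where
  Hom A B := gHom k C A B
  id A := ⟨LinearMap.id, by
    change LinearMap.rTensor C LinearMap.id ∘ₗ A.ρ = A.ρ ∘ₗ LinearMap.id
    rw [LinearMap.rTensor_id, LinearMap.id_comp, LinearMap.comp_id]⟩
  comp {A B D} f g := ⟨g.1 ∘ₗ f.1, by
    have hf : LinearMap.rTensor C f.1 ∘ₗ A.ρ = B.ρ ∘ₗ f.1 := f.2
    have hg : LinearMap.rTensor C g.1 ∘ₗ B.ρ = D.ρ ∘ₗ g.1 := g.2
    change LinearMap.rTensor C (g.1 ∘ₗ f.1) ∘ₗ A.ρ = D.ρ ∘ₗ (g.1 ∘ₗ f.1)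
    rw [LinearMap.rTensor_comp, LinearMap.comp_assoc, hf, ← LinearMap.comp_assoc, hg,
      LinearMap.comp_assoc]⟩
  id_comp f := by apply Subtype.ext; simp
  comp_id f := by apply Subtype.ext; simp
  assoc f g h := by apply Subtype.ext; simp [LinearMap.comp_assoc]

def gforget : GComod k C ⥤ ModuleCat.{u} k where
  obj A := ModuleCat.of k A.carrier
  map f := ModuleCat.ofHom f.1
  map_id _ := rfl
  map_comp _ _ := rfl

instance (A B : GComod k C) : AddCommGroup (A ⟶ B) :=
  inferInstanceAs (AddCommGroup (gHom k C A B))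

instance : Preadditive (GComod k C) where
  add_comp A B D f g h := by
    apply Subtype.ext
    change h.1 ∘ₗ (f.1 + g.1) = h.1 ∘ₗ f.1 + h.1 ∘ₗ g.1
    rw [LinearMap.comp_add]
  comp_add A B D f g h := by
    apply Subtype.ext
    change (g.1 + h.1) ∘ₗ f.1 = g.1 ∘ₗ f.1 + h.1 ∘ₗ f.1
    rw [LinearMap.add_comp]

instance : CategoryTheory.Linear k (GComod k C) where
  homModule A B := inferInstanceAs (Module k (gHom k C A B))
  smul_comp A B D c f g := by
    apply Subtype.ext
    change g.1 ∘ₗ (c • f.1) = c • (g.1 ∘ₗ f.1)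
    rw [LinearMap.comp_smul]
  comp_smul A B D f c g := by
    apply Subtype.ext
    change (c • g.1) ∘ₗ f.1 = c • (g.1 ∘ₗ f.1)
    rw [LinearMap.smul_comp]


-- ===== auxiliary development =====
namespace GAux

open LinearMap

variable {k} {C}

section Nat

variable {X Y : Type u} [AddCommGroup X] [Module k X] [AddCommGroup Y] [Module k Y]

theorem gCounitLast_natural (f : X →ₗ[k] Y) :
    f ∘ₗ gCounitLast k C X = gCounitLast k C Y ∘ₗ LinearMap.rTensor C f := by
  apply TensorProduct.ext'
  intro x c
  simp [gCounitLast, TensorProduct.rid_tmul]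

theorem gComulLast_natural (f : X →ₗ[k] Y) :
    gComulLast k C Y ∘ₗ LinearMap.rTensor C f =
      LinearMap.rTensor C (LinearMap.rTensor C f) ∘ₗ gComulLast k C X := by
  apply TensorProduct.ext'
  intro x c
  simp only [LinearMap.comp_apply, LinearMap.rTensor_tmul, gComulLast,
    LinearEquiv.coe_coe, LinearMap.lTensor_tmul]
  induction Coalgebra.comul (R := k) c using TensorProduct.induction_on with
  | zero => simp
  | tmul c₁ c₂ => simp [TensorProduct.assoc_symm_tmul]
  | add u v hu hv => simp only [TensorProduct.tmul_add, map_add, hu, hv]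

/-- extraction of a `C`-coefficient via a functional `φ`. -/
def extr (φ : C →ₗ[k] k) : (X ⊗[k] C) →ₗ[k] X :=
  (TensorProduct.rid k X).toLinearMap ∘ₗ LinearMap.lTensor X φ

@[simp] theorem extr_tmul (φ : C →ₗ[k] k) (x : X) (c : C) :
    extr φ (x ⊗ₜ[k] c) = φ c • x := by
  simp [extr, TensorProduct.rid_tmul]

theorem extr_natural (φ : C →ₗ[k] k) (f : X →ₗ[k] Y) (u : X ⊗[k] C) :
    extr φ (LinearMap.rTensor C f u) = f (extr φ u) := by
  induction u using TensorProduct.induction_on with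
  | zero => simp
  | tmul x c => simp
  | add u v hu hv => simp [map_add, hu, hv]

theorem extr_gComulLast (φ : C →ₗ[k] k) (u : X ⊗[k] C) :
    extr φ (gComulLast k C X u) =
      LinearMap.lTensor X ((TensorProduct.rid k C).toLinearMap ∘ₗ
        LinearMap.lTensor C φ ∘ₗ Coalgebra.comul) u := by
  induction u using TensorProduct.induction_on with
  | zero => simp
  | tmul x c =>
      simp only [gComulLast, LinearMap.comp_apply, LinearEquiv.coe_coe,
        LinearMap.lTensor_tmul]
      induction Coalgebra.comul (R := k) c using TensorProduct.induction_on with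
      | zero => simp
      | tmul c₁ c₂ =>
          simp [TensorProduct.assoc_symm_tmul, TensorProduct.rid_tmul,
            TensorProduct.tmul_smul, TensorProduct.smul_tmul']
      | add u v hu hv => simp only [TensorProduct.tmul_add, map_add, hu, hv]
  | add u v hu hv => simp [map_add, hu, hv]

end Nat

end GAux
namespace GAux
section Fund

variable {k} {C}

/-- `W` is a subcomodule of `A`. -/
def Inv (A : GComod k C) (W : Submodule k A.carrier) : Prop :=
  ∀ w ∈ W, A.ρ w ∈ LinearMap.range (LinearMap.rTensor C W.subtype)

theorem inv_bot (A : GComod k C) : Inv A (⊥ : Submodule k A.carrier) := by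
  intro w hw
  rw [Submodule.mem_bot] at hw
  subst hw
  rw [map_zero]
  exact zero_mem _

theorem range_rTensor_mono {A : GComod k C} {W₁ W₂ : Submodule k A.carrier} (h : W₁ ≤ W₂) :
    LinearMap.range (LinearMap.rTensor C W₁.subtype) ≤
      LinearMap.range (LinearMap.rTensor C W₂.subtype) := by
  intro u hu
  obtain ⟨v, rfl⟩ := hu
  refine ⟨LinearMap.rTensor C (Submodule.inclusion h) v, ?_⟩
  rw [← LinearMap.comp_apply, ← LinearMap.rTensor_comp]
  rfl

theorem inv_sup {A : GComod k C} {W₁ W₂ : Submodule k A.carrier}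
    (h₁ : Inv A W₁) (h₂ : Inv A W₂) : Inv A (W₁ ⊔ W₂) := by
  intro w hw
  obtain ⟨w₁, hw₁, w₂, hw₂, rfl⟩ := Submodule.mem_sup.mp hw
  rw [map_add]
  exact add_mem
    (range_rTensor_mono le_sup_left (h₁ w₁ hw₁))
    (range_rTensor_mono le_sup_right (h₂ w₂ hw₂))

/-- The fundamental theorem of comodules: every element of a comodule lies in a
finite-dimensional subcomodule. -/
theorem exists_fd_inv (A : GComod k C) (x : A.carrier) :
    ∃ W : Submodule k A.carrier, FiniteDimensional k W ∧ x ∈ W ∧ Inv A W := by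
  classical
  set b := Module.Basis.ofVectorSpace k C with hb
  let e : (A.carrier ⊗[k] C) ≃ₗ[k] (Module.Basis.ofVectorSpaceIndex k C →₀ A.carrier) :=
    (TensorProduct.congr (LinearEquiv.refl k A.carrier) b.repr).trans
      (TensorProduct.finsuppScalarRight k k A.carrier _)
  have he : ∀ (u : A.carrier ⊗[k] C) (j), e u j = extr (b.coord j) u := by
    intro u j
    induction u using TensorProduct.induction_on with
    | zero => simp
    | tmul a c =>
        simp [e, TensorProduct.congr_tmul, TensorProduct.finsuppScalarRight_apply_tmul_apply,
          Module.Basis.coord_apply]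
    | add u v hu hv => simp [map_add, Finsupp.add_apply, hu, hv]
  have hsymm : ∀ g : Module.Basis.ofVectorSpaceIndex k C →₀ A.carrier,
      e.symm g = g.sum fun j m => m ⊗ₜ[k] (b j) := by
    intro g
    induction g using Finsupp.induction with
    | zero => simp
    | single_add j m g hj hm ih =>
        rw [map_add, ih, Finsupp.sum_add_index (by simp) (by intros; rw [TensorProduct.add_tmul]),
          Finsupp.sum_single_index (by simp)]
        congr 1
        simp only [e, LinearEquiv.trans_symm, LinearEquiv.trans_apply,
          TensorProduct.finsuppScalarRight_symm_apply_single]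
        simp [TensorProduct.congr_symm_tmul]
  have hsum : ∀ u : A.carrier ⊗[k] C, u = (e u).sum fun j m => m ⊗ₜ[k] (b j) := by
    intro u
    conv_lhs => rw [← e.symm_apply_apply u]
    exact hsymm (e u)
  set g := e (A.ρ x) with hg
  set S : Finset A.carrier := g.support.image g with hS
  set W : Submodule k A.carrier := Submodule.span k (S : Set A.carrier) with hW
  have hmem : ∀ j, g j ∈ W := by
    intro j
    by_cases hj : j ∈ g.support
    · exact Submodule.subset_span (Finset.mem_coe.mpr (Finset.mem_image_of_mem g hj))
    · rw [Finsupp.notMem_support_iff.mp hj]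
      exact zero_mem _
  have hfd : FiniteDimensional k W := FiniteDimensional.span_finset k S
  have hx : x ∈ W := by
    have hcx : gCounitLast k C A.carrier (A.ρ x) = x := LinearMap.congr_fun A.counit x
    rw [← hcx, hsum (A.ρ x)]
    rw [map_finsuppSum, Finsupp.sum]
    refine Submodule.sum_mem W ?_
    intro j _
    have hterm : (gCounitLast k C A.carrier) (g j ⊗ₜ[k] (b j)) =
        Coalgebra.counit (R := k) (b j) • g j := by
      simp [gCounitLast, TensorProduct.rid_tmul]
    rw [hterm]
    exact Submodule.smul_mem W _ (hmem j)
  refine ⟨W, hfd, hx, ?_⟩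
  have hWle : W ≤ Submodule.comap A.ρ (LinearMap.range (LinearMap.rTensor C W.subtype)) := by
    rw [hW, Submodule.span_le]
    intro m hm
    obtain ⟨j, hj, rfl⟩ := Finset.mem_image.mp hm
    simp only [SetLike.mem_coe, Submodule.mem_comap]
    have h0 : g j = extr (b.coord j) (A.ρ x) := he _ j
    have h1 : A.ρ (g j) = extr (b.coord j) ((LinearMap.rTensor C A.ρ) (A.ρ x)) := by
      rw [h0, ← extr_natural]
    have h2 : (LinearMap.rTensor C A.ρ) (A.ρ x) = gComulLast k C A.carrier (A.ρ x) :=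
      (LinearMap.congr_fun A.coassoc x).symm
    rw [h1, h2, extr_gComulLast, hsum (A.ρ x)]
    rw [map_finsuppSum, Finsupp.sum]
    refine Submodule.sum_mem _ ?_
    intro i _
    rw [LinearMap.lTensor_tmul]
    exact ⟨(⟨g i, hmem i⟩ : W) ⊗ₜ[k] _, by rw [LinearMap.rTensor_tmul]; rfl⟩
  intro w hw
  exact Submodule.mem_comap.mp (hWle hw)

end Fund
end GAux
namespace GAux
section Sub

variable {k} {C}
variable {A : GComod k C}

/-- a retraction of the inclusion of `W`. -/
def retr (W : Submodule k A.carrier) : A.carrier →ₗ[k] W :=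
  (W.subtype.exists_leftInverse_of_injective W.ker_subtype).choose

theorem retr_comp (W : Submodule k A.carrier) : retr W ∘ₗ W.subtype = LinearMap.id :=
  (W.subtype.exists_leftInverse_of_injective W.ker_subtype).choose_spec

/-- the coaction on an invariant submodule. -/
def subρ (W : Submodule k A.carrier) : W →ₗ[k] (W ⊗[k] C) :=
  LinearMap.rTensor C (retr W) ∘ₗ A.ρ ∘ₗ W.subtype

theorem rTensor_subtype_subρ {W : Submodule k A.carrier} (hW : Inv A W) (w : W) :
    LinearMap.rTensor C W.subtype (subρ W w) = A.ρ (w : A.carrier) := by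
  obtain ⟨u, hu⟩ := hW w w.2
  have h1 : subρ W w = u := by
    have : subρ W w = LinearMap.rTensor C (retr W) (A.ρ (w : A.carrier)) := rfl
    rw [this, ← hu, ← LinearMap.comp_apply, ← LinearMap.rTensor_comp, retr_comp,
      LinearMap.rTensor_id, LinearMap.id_apply]
  rw [h1, hu]

theorem rTensor_rTensor_subtype_injective (W : Submodule k A.carrier) :
    Function.Injective (LinearMap.rTensor C (LinearMap.rTensor C W.subtype) :
      (W ⊗[k] C) ⊗[k] C →ₗ[k] (A.carrier ⊗[k] C) ⊗[k] C) := by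
  have h : LinearMap.rTensor C (LinearMap.rTensor C (retr W)) ∘ₗ
      LinearMap.rTensor C (LinearMap.rTensor C W.subtype) = LinearMap.id := by
    rw [← LinearMap.rTensor_comp, ← LinearMap.rTensor_comp, retr_comp,
      LinearMap.rTensor_id, LinearMap.rTensor_id]
  intro u v huv
  have := congrArg (LinearMap.rTensor C (LinearMap.rTensor C (retr W))) huv
  rwa [← LinearMap.comp_apply, ← LinearMap.comp_apply, h, LinearMap.id_apply,
    LinearMap.id_apply] at this

/-- An invariant submodule as a comodule object. -/
def subObj (W : Submodule k A.carrier) (hW : Inv A W) : GComod k C where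
  carrier := W
  ρ := subρ W
  counit := by
    apply LinearMap.ext
    intro w
    apply Subtype.ext
    have h1 : (W.subtype (gCounitLast k C W (subρ W w)) : A.carrier) =
        gCounitLast k C A.carrier (LinearMap.rTensor C W.subtype (subρ W w)) := by
      rw [← LinearMap.comp_apply, gCounitLast_natural W.subtype, LinearMap.comp_apply]
    have h2 := LinearMap.congr_fun A.counit (w : A.carrier)
    simp only [LinearMap.comp_apply, LinearMap.id_apply] at h2 ⊢
    rw [show (((gCounitLast k C ↥W) ((subρ W) w)) : A.carrier) =
      W.subtype ((gCounitLast k C ↥W) ((subρ W) w)) from rfl, h1,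
      rTensor_subtype_subρ hW, h2]
  coassoc := by
    apply LinearMap.ext
    intro w
    apply rTensor_rTensor_subtype_injective W
    simp only [LinearMap.comp_apply]
    have lhs : LinearMap.rTensor C (LinearMap.rTensor C W.subtype)
        (gComulLast k C W (subρ W w)) = gComulLast k C A.carrier (A.ρ (w : A.carrier)) := by
      rw [← LinearMap.comp_apply, ← gComulLast_natural W.subtype, LinearMap.comp_apply,
        rTensor_subtype_subρ hW]
    have rhs : LinearMap.rTensor C (LinearMap.rTensor C W.subtype)
        (LinearMap.rTensor C (subρ W) (subρ W w)) =
        LinearMap.rTensor C A.ρ (A.ρ (w : A.carrier)) := by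
      rw [← LinearMap.comp_apply, ← LinearMap.rTensor_comp]
      have : (LinearMap.rTensor C W.subtype) ∘ₗ subρ W = A.ρ ∘ₗ W.subtype :=
        LinearMap.ext fun v => rTensor_subtype_subρ hW v
      rw [this, LinearMap.rTensor_comp, LinearMap.comp_apply, rTensor_subtype_subρ hW]
    rw [lhs, rhs]
    exact LinearMap.congr_fun A.coassoc (w : A.carrier)

/-- the inclusion morphism. -/
def subHom (W : Submodule k A.carrier) (hW : Inv A W) : subObj W hW ⟶ A :=
  ⟨W.subtype, LinearMap.ext fun w => rTensor_subtype_subρ hW w⟩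

instance mono_subHom (W : Submodule k A.carrier) (hW : Inv A W) : Mono (subHom W hW) := by
  constructor
  intro Z g h hgh
  apply Subtype.ext
  apply LinearMap.ext
  intro z
  have := congrArg Subtype.val hgh
  have h2 : W.subtype ∘ₗ g.1 = W.subtype ∘ₗ h.1 := this
  have h3 := LinearMap.congr_fun h2 z
  exact Subtype.ext h3

theorem rTensor_subtype_injective (W : Submodule k A.carrier) :
    Function.Injective (LinearMap.rTensor C W.subtype :
      W ⊗[k] C →ₗ[k] A.carrier ⊗[k] C) := by
  have h : LinearMap.rTensor C (retr W) ∘ₗ LinearMap.rTensor C W.subtype = LinearMap.id := by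
    rw [← LinearMap.rTensor_comp, retr_comp, LinearMap.rTensor_id]
  intro u v huv
  have := congrArg (LinearMap.rTensor C (retr W)) huv
  rwa [← LinearMap.comp_apply, ← LinearMap.comp_apply, h, LinearMap.id_apply,
    LinearMap.id_apply] at this

theorem rTensor_subtype_comp_subρ {W : Submodule k A.carrier} (hW : Inv A W) :
    LinearMap.rTensor C W.subtype ∘ₗ subρ W = A.ρ ∘ₗ W.subtype :=
  LinearMap.ext fun w => rTensor_subtype_subρ hW w

/-- inclusions between invariant submodules are comodule maps. -/
def homOfLe {W₁ W₂ : Submodule k A.carrier} (hW₁ : Inv A W₁) (hW₂ : Inv A W₂)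
    (h : W₁ ≤ W₂) : subObj W₁ hW₁ ⟶ subObj W₂ hW₂ := by
  refine ⟨Submodule.inclusion h, ?_⟩
  have hcomp : W₂.subtype ∘ₗ Submodule.inclusion h = W₁.subtype := by ext; rfl
  have h1 : LinearMap.rTensor C W₂.subtype ∘ₗ
      (LinearMap.rTensor C (Submodule.inclusion h) ∘ₗ subρ (A := A) W₁) =
      A.ρ ∘ₗ W₁.subtype := by
    rw [← LinearMap.comp_assoc, ← LinearMap.rTensor_comp, hcomp]
    exact rTensor_subtype_comp_subρ hW₁
  have h2 : LinearMap.rTensor C W₂.subtype ∘ₗ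
      (subρ (A := A) W₂ ∘ₗ Submodule.inclusion h) = A.ρ ∘ₗ W₁.subtype := by
    rw [← LinearMap.comp_assoc, rTensor_subtype_comp_subρ hW₂, LinearMap.comp_assoc, hcomp]
  exact LinearMap.ext fun w => rTensor_subtype_injective W₂
    ((LinearMap.congr_fun h1 w).trans (LinearMap.congr_fun h2 w).symm)

theorem homOfLe_comp {W₁ W₂ : Submodule k A.carrier} (hW₁ : Inv A W₁) (hW₂ : Inv A W₂)
    (h : W₁ ≤ W₂) : homOfLe hW₁ hW₂ h ≫ subHom W₂ hW₂ = subHom W₁ hW₁ := by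
  apply Subtype.ext
  rfl

end Sub
end GAux
namespace GAux
section Iso

variable {k} {C}

/-- An isomorphism of comodules gives a linear equivalence of carriers. -/
def isoToLinearEquiv {A B : GComod k C} (f : A ⟶ B) [IsIso f] :
    A.carrier ≃ₗ[k] B.carrier :=
  LinearEquiv.ofLinear f.1 (inv f).1
    (congrArg Subtype.val (IsIso.inv_hom_id f))
    (congrArg Subtype.val (IsIso.hom_inv_id f))

/-- `C` itself as a comodule. -/
abbrev Cobj : GComod k C where
  carrier := C
  ρ := Coalgebra.comul
  counit := by
    apply LinearMap.ext
    intro c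
    simp only [gCounitLast, LinearMap.comp_apply, LinearEquiv.coe_coe, LinearMap.id_apply]
    rw [show (LinearMap.lTensor C (Coalgebra.counit (R := k))) (Coalgebra.comul c) =
      (Coalgebra.counit (R := k)).lTensor C (Coalgebra.comul c) from rfl,
      Coalgebra.lTensor_counit_comul]
    simp [TensorProduct.rid_tmul]
  coassoc := by
    rw [gComulLast, LinearMap.comp_assoc]
    exact Coalgebra.coassoc_symm

theorem hom_eq_of_counit_comp {A : GComod k C} (f : A ⟶ (Cobj (k := k) (C := C))) :
    f.1 = (TensorProduct.lid k C).toLinearMap ∘ₗ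
      LinearMap.rTensor C ((Coalgebra.counit : C →ₗ[k] k) ∘ₗ f.1) ∘ₗ A.ρ := by
  have hf : LinearMap.rTensor C f.1 ∘ₗ A.ρ = (Coalgebra.comul : C →ₗ[k] C ⊗[k] C) ∘ₗ f.1 := f.2
  rw [LinearMap.rTensor_comp, LinearMap.comp_assoc, hf, ← LinearMap.comp_assoc,
    ← LinearMap.comp_assoc]
  have h1 : (TensorProduct.lid k C).toLinearMap ∘ₗ
      LinearMap.rTensor C (Coalgebra.counit (R := k)) ∘ₗ Coalgebra.comul = LinearMap.id := by
    rw [show LinearMap.rTensor C (Coalgebra.counit (R := k)) =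
      (Coalgebra.counit (R := k)).rTensor C from rfl, Coalgebra.rTensor_counit_comp_comul]
    apply LinearMap.ext
    intro c
    simp
  rw [LinearMap.comp_assoc (f := (Coalgebra.comul : C →ₗ[k] C ⊗[k] C)), h1, LinearMap.id_comp]

theorem counit_comp_injective {A : GComod k C} :
    Function.Injective (fun f : A ⟶ (Cobj (k := k) (C := C)) =>
      (Coalgebra.counit : C →ₗ[k] k) ∘ₗ f.1) := by
  intro f g hfg
  have hfg' : (Coalgebra.counit : C →ₗ[k] k) ∘ₗ f.1 = (Coalgebra.counit : C →ₗ[k] k) ∘ₗ g.1 := hfg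
  apply Subtype.ext
  rw [hom_eq_of_counit_comp f, hom_eq_of_counit_comp g, hfg']

/-- The linear map sending a comodule morphism into `C` to the corresponding functional. -/
def toDual (A : GComod k C) : (A ⟶ (Cobj (k := k) (C := C))) →ₗ[k] (A.carrier →ₗ[k] k) where
  toFun f := (Coalgebra.counit : C →ₗ[k] k) ∘ₗ f.1
  map_add' f g := by
    change (Coalgebra.counit : C →ₗ[k] k) ∘ₗ (f.1 + g.1) = _
    rw [LinearMap.comp_add]
  map_smul' c f := by
    change (Coalgebra.counit : C →ₗ[k] k) ∘ₗ (c • f.1) = _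
    rw [LinearMap.comp_smul]
    rfl

theorem toDual_injective (A : GComod k C) : Function.Injective (toDual A) :=
  counit_comp_injective

instance findim_hom_Cobj (A : GComod k C) [FiniteDimensional k A.carrier] :
    FiniteDimensional k (A ⟶ (Cobj (k := k) (C := C))) :=
  FiniteDimensional.of_injective (toDual A) (toDual_injective A)

end Iso
end GAux
namespace GAux
section Key

variable {k} {C}
variable {R : Type u} [Ring R] [Algebra k R]
variable (E : ModuleCat.{u} Rᵐᵒᵖ ≌ GComod k C) [E.functor.Additive]

/-- If the module corresponding to a comodule under the equivalence is finitely
generated, then the comodule is finite dimensional. -/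
theorem carrier_fd (A : GComod k C) (hM : Module.Finite Rᵐᵒᵖ (E.inverse.obj A)) :
    FiniteDimensional k A.carrier := by
  classical
  haveI : E.functor.PreservesZeroMorphisms := E.functor.preservesZeroMorphisms_of_additive
  let ι := {W : Submodule k A.carrier // FiniteDimensional k ↥W ∧ Inv A W}
  haveI : Nonempty ι := ⟨⟨⊥, inferInstance, inv_bot A⟩⟩
  let F : ι → Submodule Rᵐᵒᵖ (E.inverse.obj A) :=
    fun i => LinearMap.range (E.inverse.map (subHom i.1 i.2.2)).hom
  have hFmono : ∀ (i j : ι), i.1 ≤ j.1 → F i ≤ F j := by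
    rintro i j hij _ ⟨v, rfl⟩
    refine ⟨E.inverse.map (homOfLe i.2.2 j.2.2 hij) v, ?_⟩
    calc E.inverse.map (subHom j.1 j.2.2) (E.inverse.map (homOfLe i.2.2 j.2.2 hij) v)
        = (E.inverse.map (homOfLe i.2.2 j.2.2 hij) ≫ E.inverse.map (subHom j.1 j.2.2)) v := rfl
      _ = E.inverse.map (homOfLe i.2.2 j.2.2 hij ≫ subHom j.1 j.2.2) v := by
          rw [Functor.map_comp]
      _ = E.inverse.map (subHom i.1 i.2.2) v := by rw [homOfLe_comp]
  have hsupmem : ∀ i j : ι, ∃ l : ι, i.1 ≤ l.1 ∧ j.1 ≤ l.1 := by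
    intro i j
    haveI := i.2.1; haveI := j.2.1
    exact ⟨⟨i.1 ⊔ j.1, inferInstance, inv_sup i.2.2 j.2.2⟩, le_sup_left, le_sup_right⟩
  have hdir : Directed (· ≤ ·) F := by
    intro i j
    obtain ⟨l, hil, hjl⟩ := hsupmem i j
    exact ⟨l, hFmono i l hil, hFmono j l hjl⟩
  have hN : (⨆ i, F i) = ⊤ := by
    by_contra hne
    obtain ⟨m, hm⟩ : ∃ m, m ∉ (⨆ i, F i) := by
      by_contra hc
      push_neg at hc
      exact hne (Submodule.eq_top_iff'.mpr hc)
    set N := (⨆ i, F i) with hNdef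
    let q : E.inverse.obj A ⟶ ModuleCat.of Rᵐᵒᵖ ((E.inverse.obj A) ⧸ N) := ModuleCat.ofHom N.mkQ
    have hq0 : ∀ i : ι, E.inverse.map (subHom i.1 i.2.2) ≫ q = 0 := by
      intro i
      apply ModuleCat.hom_ext
      apply LinearMap.ext
      intro v
      have hv : E.inverse.map (subHom i.1 i.2.2) v ∈ N := le_iSup F i ⟨v, rfl⟩
      exact (Submodule.Quotient.mk_eq_zero N).mpr hv
    set h : A ⟶ E.functor.obj (ModuleCat.of Rᵐᵒᵖ ((E.inverse.obj A) ⧸ N)) :=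
      (E.counitIso.app A).inv ≫ E.functor.map q with hhdef
    have hic : ∀ i : ι, subHom i.1 i.2.2 ≫ h = 0 := by
      intro i
      have hnat : subHom i.1 i.2.2 ≫ (E.counitIso.app A).inv =
          (E.counitIso.app (subObj i.1 i.2.2)).inv ≫
            E.functor.map (E.inverse.map (subHom i.1 i.2.2)) := by
        have := E.counitIso.inv.naturality (subHom i.1 i.2.2)
        simpa using this
      rw [hhdef, ← Category.assoc, hnat, Category.assoc, ← Functor.map_comp, hq0 i,
        Functor.map_zero, Limits.comp_zero]
    have hzero : h = 0 := by
      apply Subtype.ext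
      apply LinearMap.ext
      intro x
      obtain ⟨W, hfd, hxW, hinv⟩ := exists_fd_inv A x
      have h2 : h.1 ∘ₗ W.subtype = (0 : W →ₗ[k] _) :=
        congrArg Subtype.val (hic ⟨W, hfd, hinv⟩)
      exact LinearMap.congr_fun h2 ⟨x, hxW⟩
    have hFq : E.functor.map q = 0 := by
      have : E.functor.map q = (E.counitIso.app A).hom ≫ h := by
        rw [hhdef, ← Category.assoc, Iso.hom_inv_id, Category.id_comp]
      rw [this, hzero, Limits.comp_zero]
    have hq : q = 0 := E.functor.map_injective (by rw [hFq, Functor.map_zero])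
    apply hm
    have : N.mkQ m = 0 := by rw [show N.mkQ = q.hom from rfl, hq]; rfl
    exact (Submodule.Quotient.mk_eq_zero N).mp this
  obtain ⟨s, hs⟩ := Module.finite_def.mp hM
  have hord : ∀ m ∈ s, ∃ i : ι, m ∈ F i := by
    intro m _
    have hmem : m ∈ ⨆ i, F i := hN ▸ Submodule.mem_top
    exact (Submodule.mem_iSup_of_directed F hdir).mp hmem
  have hbig : ∀ t : Finset ↥(E.inverse.obj A),
      (∀ m ∈ t, ∃ i : ι, m ∈ F i) → ∃ i : ι, ∀ m ∈ t, m ∈ F i := by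
    intro t
    induction t using Finset.induction_on with
    | empty => exact fun _ => ⟨Classical.arbitrary ι, by simp⟩
    | @insert a t ha ih =>
        intro hall
        obtain ⟨i0, hi0⟩ := ih (fun m hm => hall m (Finset.mem_insert_of_mem hm))
        obtain ⟨ia, hia⟩ := hall a (Finset.mem_insert_self a t)
        obtain ⟨l, hal, h0l⟩ := hdir ia i0
        refine ⟨l, fun m hm => ?_⟩
        rcases Finset.mem_insert.mp hm with rfl | hm
        · exact hal hia
        · exact h0l (hi0 m hm)
  obtain ⟨i, hi⟩ := hbig s hord
  have hFtop : F i = ⊤ := by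
    rw [eq_top_iff, ← hs, Submodule.span_le]
    intro m hm
    exact hi m hm
  haveI : Mono (E.inverse.map (subHom i.1 i.2.2)) := by
    haveI := Functor.preservesMonomorphisms_of_adjunction E.toAdjunction
    infer_instance
  haveI : Epi (E.inverse.map (subHom i.1 i.2.2)) :=
    (ModuleCat.epi_iff_surjective _).mpr
      (LinearMap.range_eq_top.mp hFtop)
  haveI : IsIso (E.inverse.map (subHom i.1 i.2.2)) := isIso_of_mono_of_epi _
  haveI : E.inverse.ReflectsIsomorphisms :=
    E.fullyFaithfulInverse.reflectsIsomorphisms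
  haveI : IsIso (subHom i.1 i.2.2) := isIso_of_reflects_iso (subHom i.1 i.2.2) E.inverse
  haveI : FiniteDimensional k (subObj i.1 i.2.2).carrier := i.2.1
  exact (isoToLinearEquiv (subHom i.1 i.2.2)).finiteDimensional

end Key
end GAux
namespace GAux
section ModAux

open ModuleCat

variable {k}
variable {R : Type u} [Ring R] [Algebra k R]

theorem smul_hom_apply (M N : ModuleCat.{u} Rᵐᵒᵖ) (c : k) (f : M ⟶ N) (x : M) :
    (c • f) x = algebraMap k Rᵐᵒᵖ c • (f x) := rfl

/-- If the `k`-space of morphisms from the regular module to `M` is finite dimensional,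
then `M` is finitely generated. -/
theorem fg_of_hom_fd (M : ModuleCat.{u} Rᵐᵒᵖ)
    (h : Module.Finite k (ModuleCat.of Rᵐᵒᵖ Rᵐᵒᵖ ⟶ M)) : Module.Finite Rᵐᵒᵖ M := by
  classical
  obtain ⟨S, hS⟩ := Module.finite_def.mp h
  rw [Module.finite_def]
  refine ⟨S.image (fun f => f (1 : Rᵐᵒᵖ)), ?_⟩
  set Q := Submodule.span Rᵐᵒᵖ ((S.image (fun f => f (1 : Rᵐᵒᵖ))) : Set M) with hQ
  rw [eq_top_iff]
  rintro m -
  let T : Submodule k (ModuleCat.of Rᵐᵒᵖ Rᵐᵒᵖ ⟶ M) :=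
    { carrier := {f | f (1 : Rᵐᵒᵖ) ∈ Q}
      add_mem' := by
        intro f g hf hg
        show (f.hom + g.hom) (1 : Rᵐᵒᵖ) ∈ Q
        rw [LinearMap.add_apply]
        exact add_mem hf hg
      zero_mem' := by
        show (0 : ModuleCat.of Rᵐᵒᵖ Rᵐᵒᵖ ⟶ M) (1 : Rᵐᵒᵖ) ∈ Q
        exact zero_mem Q
      smul_mem' := by
        intro c f hf
        show (c • f) (1 : Rᵐᵒᵖ) ∈ Q
        rw [smul_hom_apply]
        exact Q.smul_mem _ hf }
  have hT : ∀ f : (ModuleCat.of Rᵐᵒᵖ Rᵐᵒᵖ ⟶ M), f ∈ T := by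
    intro f
    have hle : (⊤ : Submodule k (ModuleCat.of Rᵐᵒᵖ Rᵐᵒᵖ ⟶ M)) ≤ T := by
      rw [← hS, Submodule.span_le]
      intro g hg
      exact Submodule.subset_span (Finset.mem_coe.mpr
        (Finset.mem_image_of_mem (fun f => f (1 : Rᵐᵒᵖ)) hg))
    exact hle trivial
  have hψ := hT (ModuleCat.ofHom (LinearMap.toSpanSingleton Rᵐᵒᵖ M m))
  have hm : (LinearMap.toSpanSingleton Rᵐᵒᵖ M m) (1 : Rᵐᵒᵖ) = m := one_smul _ m
  rw [show (ModuleCat.ofHom (LinearMap.toSpanSingleton Rᵐᵒᵖ M m) ∈ T) =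
    ((LinearMap.toSpanSingleton Rᵐᵒᵖ M m) (1 : Rᵐᵒᵖ) ∈ Q) from rfl, hm] at hψ
  exact hψ

/-- If the endomorphisms of the regular module form a finite-dimensional `k`-space,
then `R` is finite dimensional. -/
theorem fd_R_of_fd_end
    (h : @FiniteDimensional k (ModuleCat.of Rᵐᵒᵖ Rᵐᵒᵖ ⟶ ModuleCat.of Rᵐᵒᵖ Rᵐᵒᵖ) _ _
      (Linear.homModule _ _)) :
    FiniteDimensional k R := by
  letI : Module k (ModuleCat.of Rᵐᵒᵖ Rᵐᵒᵖ ⟶ ModuleCat.of Rᵐᵒᵖ Rᵐᵒᵖ) := Linear.homModule _ _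
  let Ψ : R →ₗ[k] (ModuleCat.of Rᵐᵒᵖ Rᵐᵒᵖ ⟶ ModuleCat.of Rᵐᵒᵖ Rᵐᵒᵖ) :=
    { toFun := fun r => ModuleCat.ofHom (LinearMap.toSpanSingleton Rᵐᵒᵖ Rᵐᵒᵖ (MulOpposite.op r))
      map_add' := by
        intro r s
        apply ModuleCat.hom_ext
        apply LinearMap.ext_ring
        show (1 : Rᵐᵒᵖ) • MulOpposite.op (r + s) =
          (1 : Rᵐᵒᵖ) • MulOpposite.op r + (1 : Rᵐᵒᵖ) • MulOpposite.op s
        rw [one_smul, one_smul, one_smul, MulOpposite.op_add]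
      map_smul' := by
        intro c r
        apply ModuleCat.hom_ext
        apply LinearMap.ext_ring
        show (1 : Rᵐᵒᵖ) • MulOpposite.op (c • r) =
          algebraMap k Rᵐᵒᵖ c • ((1 : Rᵐᵒᵖ) • MulOpposite.op r)
        rw [one_smul, one_smul, Algebra.smul_def c r, MulOpposite.algebraMap_apply,
          smul_eq_mul]
        apply MulOpposite.unop_injective
        rw [MulOpposite.unop_mul, MulOpposite.unop_op, MulOpposite.unop_op,
          MulOpposite.unop_op]
        exact Algebra.commutes c r }
  have e1 : ∀ r : R, (Ψ r) (1 : Rᵐᵒᵖ) = MulOpposite.op r := fun r => one_smul _ _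
  have hinj : Function.Injective Ψ := by
    intro r s hrs
    have h2 := congrArg (fun f : (ModuleCat.of Rᵐᵒᵖ Rᵐᵒᵖ ⟶ ModuleCat.of Rᵐᵒᵖ Rᵐᵒᵖ) =>
      f (1 : Rᵐᵒᵖ)) hrs
    dsimp only at h2
    rw [e1, e1] at h2
    exact MulOpposite.op_injective h2
  exact FiniteDimensional.of_injective Ψ hinj

end ModAux
end GAux

/-- If there is a `k`-linear equivalence between the category of right
`R`-modules and the category of right `C`-comodules, then both `R` and `C` are finite
dimensional over `k`. -/
theorem finiteDimensional_of_equiv_modules_comodules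
    (R : Type u) [Ring R] [Algebra k R]
    (E : ModuleCat.{u} Rᵐᵒᵖ ≌ GComod k C)
    [E.functor.Additive] [E.functor.Linear k] :
    FiniteDimensional k R ∧ FiniteDimensional k C := by
  classical
  set reg : ModuleCat.{u} Rᵐᵒᵖ := ModuleCat.of Rᵐᵒᵖ Rᵐᵒᵖ with hreg
  set P : GComod k C := E.functor.obj reg with hPdef
  let me : ∀ X Y : ModuleCat.{u} Rᵐᵒᵖ,
      (X ⟶ Y) ≃ₗ[k] (E.functor.obj X ⟶ E.functor.obj Y) := fun X Y =>
    { toFun := fun f => E.functor.map f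
      map_add' := fun f g => E.functor.map_add
      map_smul' := fun c f => E.functor.map_smul c f
      invFun := fun g => E.functor.preimage g
      left_inv := fun f => E.functor.preimage_map f
      right_inv := fun g => E.functor.map_preimage g }
  have hPfg : Module.Finite Rᵐᵒᵖ (E.inverse.obj P) := by
    have i : E.inverse.obj P ≅ reg := (E.unitIso.app reg).symm
    haveI : Module.Finite Rᵐᵒᵖ reg := inferInstanceAs (Module.Finite Rᵐᵒᵖ Rᵐᵒᵖ)
    exact Module.Finite.equiv i.symm.toLinearEquiv
  have hP : FiniteDimensional k P.carrier := GAux.carrier_fd E P hPfg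
  haveI := hP
  haveI hEndP : FiniteDimensional k (P ⟶ P) :=
    inferInstanceAs (FiniteDimensional k (gHom k C P P))
  letI : Module k (reg ⟶ reg) := Linear.homModule reg reg
  have hEndReg : FiniteDimensional k (reg ⟶ reg) :=
    LinearEquiv.finiteDimensional (me reg reg).symm
  have hR : FiniteDimensional k R := GAux.fd_R_of_fd_end hEndReg
  set Cob : GComod k C := GAux.Cobj with hCob
  haveI hPC : FiniteDimensional k (P ⟶ Cob) := GAux.findim_hom_Cobj P
  haveI hPC' : FiniteDimensional k (P ⟶ (𝟭 (GComod k C)).obj Cob) := hPC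
  have hRM : FiniteDimensional k (reg ⟶ E.inverse.obj Cob) :=
    LinearEquiv.finiteDimensional
      (((me reg (E.inverse.obj Cob)).trans
        (Linear.homCongr k (Iso.refl P) (E.counitIso.app Cob))).symm)
  have hMfg : Module.Finite Rᵐᵒᵖ (E.inverse.obj Cob) := GAux.fg_of_hom_fd _ hRM
  have hC : FiniteDimensional k Cob.carrier := GAux.carrier_fd E Cob hMfg
  exact ⟨hR, hC⟩

end
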